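/- Let $B_1, B_2 \subseteq \mathbb{R}^n$ be convex sets, $v \in \mathbb{R}^n$, and $T : \mathbb{R}^n \to \mathbb{R}^n$ a linear map. If $B_1 \subseteq \mathrm{conv}(B_2 \cup \{v\})$, $v \notin B_1$, and $T(v) \in T(B_1)$, then $T(\mathrm{conv}(B_2 \cup \{v\})) = T(B_2)$. -/

import Mathlib

theorem stmt_2 {n : ℕ} (B₁ B₂ : Set (Fin n → ℝ)) (v : Fin n → ℝ)
    (T : (Fin n → ℝ) →ₗ[ℝ] (Fin n → ℝ))
    (hB₁ : Convex ℝ B₁) (hB₂ : Convex ℝ B₂)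
    (h1 : B₁ ⊆ convexHull ℝ (B₂ ∪ {v})) (h2 : v ∉ B₁) (h3 : T v ∈ T '' B₁) :
    T '' convexHull ℝ (B₂ ∪ {v}) = T '' B₂ := by
  rcases Set.eq_empty_or_nonempty B₂ with hE | hne
  · exfalso
    obtain ⟨b, hb, -⟩ := h3
    have := h1 hb
    rw [hE, Set.empty_union, convexHull_singleton] at this
    exact h2 (this ▸ hb)
  have hconv : convexHull ℝ (B₂ ∪ {v}) = convexJoin ℝ B₂ {v} :=
    hB₂.convexHull_union (convex_singleton v) hne ⟨v, rfl⟩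
  -- T v ∈ T '' B₂
  have key : T v ∈ T '' B₂ := by
    obtain ⟨b, hb, hTb⟩ := h3
    have hb' := h1 hb
    rw [hconv, mem_convexJoin] at hb'
    obtain ⟨w, hw, b', hb', u, t, hu, ht, hut, hx⟩ := hb'
    rw [Set.mem_singleton_iff] at hb'; rw [hb'] at hx
    rcases eq_or_lt_of_le hu with hu0 | hu0
    · exfalso
      have : b = v := by rw [← hx, ← hu0]; simp; rw [show t = 1 by linarith, one_smul]
      exact h2 (this ▸ hb)
    · refine ⟨w, hw, ?_⟩
      have : u • T w + t • T v = T v := by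
        rw [← map_smul, ← map_smul, ← map_add, hx, hTb]
      have h4 : u • T w = u • T v := by
        have : u • T v = (1 - t) • T v := by rw [show (1:ℝ) - t = u by linarith]
        rw [this, sub_smul, one_smul]
        linear_combination (norm := module) ‹u • T w + t • T v = T v›
      exact smul_right_injective _ (ne_of_gt hu0) h4
  obtain ⟨w₀, hw₀, hTw₀⟩ := key
  apply Set.Subset.antisymm
  · rintro _ ⟨x, hx, rfl⟩
    rw [hconv, mem_convexJoin] at hx
    obtain ⟨w, hw, b', hb', u, t, hu, ht, hut, hx⟩ := hx
    rw [Set.mem_singleton_iff] at hb'; rw [hb'] at hx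
    have : T x = u • T w + t • T w₀ := by
      rw [← hx]; simp [map_add, map_smul, hTw₀]
    rw [this]
    exact (hB₂.linear_image T) ⟨w, hw, rfl⟩ ⟨w₀, hw₀, rfl⟩ hu ht hut
  · exact Set.image_mono (f := T) ((Set.subset_union_left).trans (subset_convexHull ℝ _))
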